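/- arXiv:2207.05305 — 3 statements merged into one kernel-verified Lean document; each statement's English description precedes it below -/
import Mathlib

section
/- Let G=(V,E) be a connected undirected graph with positive edge lengths d_e, let s ∈ V, and let V_R ⊆ V be a set of required vertices. Let G̃=(V,Ẽ) be the directed graph obtained from G by replacing every edge [u,v] with the two opposite arcs (u,v) and (v,u), each inheriting the length of [u,v]. Then every closed directed walk in G̃ that starts and ends at s, visits every vertex of V_R, and has minimum total length among all such walks traverses each arc of Ẽ at most once. -/
/-- `w` is a closed directed walk from `s` in the digraph obtained from the
undirected graph `G` by replacing every edge `[u,v]` with the two opposite arcs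
`(u,v)` and `(v,u)`: it is a nonempty finite sequence of arcs of `G̃` in which
the head of each arc is the tail of the next one, and the tail of the first
arc and the head of the last arc are both `s`. -/
def IsClosedWalkFrom {V : Type*} (G : SimpleGraph V) (s : V) (w : List (V × V)) : Prop :=
  w.head?.map Prod.fst = some s ∧
  w.getLast?.map Prod.snd = some s ∧
  w.Chain' (fun a b => a.2 = b.1) ∧
  ∀ a ∈ w, G.Adj a.1 a.2

/-- The walk `w` visits the vertex `v`: `v` is the tail or the head of one of
its arcs. -/
def WalkVisits {V : Type*} (w : List (V × V)) (v : V) : Prop :=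
  ∃ a ∈ w, v = a.1 ∨ v = a.2

/-- The total length of the walk `w`: the sum of the lengths of its arcs,
counted with multiplicity. -/
noncomputable def walkLength {V : Type*} (d : V → V → ℝ) (w : List (V × V)) : ℝ :=
  (w.map fun a => d a.1 a.2).sum

lemma two_count_decomp {α : Type*} [BEq α] [LawfulBEq α] {a : α} :
    ∀ {l : List α}, 2 ≤ l.count a → ∃ A B C, l = A ++ a :: (B ++ a :: C) := by
  intro l h
  induction l with
  | nil => simp at h
  | cons b t ih =>
    by_cases hba : b = a
    · subst hba
      rw [List.count_cons_self] at h
      have hm : b ∈ t := List.count_pos_iff.mp (by omega)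
      obtain ⟨B, C, rfl⟩ := List.append_of_mem hm
      exact ⟨[], B, C, rfl⟩
    · rw [List.count_cons_of_ne hba] at h
      obtain ⟨A, B, C, rfl⟩ := ih h
      exact ⟨b :: A, B, C, rfl⟩


/-- If `G` is a connected undirected graph with positive edge lengths (each of
the two opposite arcs inheriting the length of the corresponding edge), then
every closed directed walk starting and ending at `s` that visits every vertex
of the required set `VR` and has minimum total length among all such walks
traverses each arc at most once. -/
theorem optimal_walk_traverses_each_arc_at_most_once
    {V : Type*} [DecidableEq V] (G : SimpleGraph V) (hG : G.Connected)
    (d : V → V → ℝ)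
    (hd_symm : ∀ u v, d u v = d v u)
    (hd_pos : ∀ u v, G.Adj u v → 0 < d u v)
    (s : V) (VR : Set V) (w : List (V × V))
    (hw : IsClosedWalkFrom G s w)
    (hvis : ∀ v ∈ VR, WalkVisits w v)
    (hmin : ∀ w', IsClosedWalkFrom G s w' → (∀ v ∈ VR, WalkVisits w' v) →
      walkLength d w ≤ walkLength d w') :
    ∀ a : V × V, w.count a ≤ 1 := by
  intro a
  by_contra hc
  push_neg at hc
  obtain ⟨A, B, C, hweq⟩ := two_count_decomp (a := a) (l := w) hc
  obtain ⟨h1, h2, h3, h4⟩ := hw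
  have hadj : G.Adj a.1 a.2 := h4 a (by rw [hweq]; simp)
  -- extract chain pieces
  rw [hweq] at h3
  rw [List.Chain', List.isChain_append] at h3
  obtain ⟨hCA, h3, hlink1⟩ := h3
  rw [List.isChain_cons] at h3
  obtain ⟨hlink2, h3⟩ := h3
  rw [List.isChain_append] at h3
  obtain ⟨hCB, h3, hlink3⟩ := h3
  rw [List.isChain_cons] at h3
  obtain ⟨hlink4, hCC⟩ := h3
  -- B nonempty
  have hBne : B ≠ [] := by
    rintro rfl
    exact hadj.ne (hlink2 a (by simp)).symm
  set rB : List (V × V) := (B.map Prod.swap).reverse with hrB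
  have hrBne : rB ≠ [] := by simp [hrB, hBne]
  have hrBhead : rB.head? = some (Prod.swap (B.getLast hBne)) := by
    simp [hrB, List.head?_reverse, List.getLast?_map, List.getLast?_eq_getLast hBne]
  have hrBlast : rB.getLast? = some (Prod.swap (B.head hBne)) := by
    simp [hrB, List.getLast?_reverse, List.head?_map, List.head?_eq_head hBne]
  have hBlast2 : (B.getLast hBne).2 = a.1 := by
    exact hlink3 (B.getLast hBne) (by rw [List.getLast?_eq_getLast hBne]; rfl) a rfl
  have hBhead1 : (B.head hBne).1 = a.2 := by
    exact (hlink2 (B.head hBne)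
      (by rw [List.head?_append_of_ne_nil _ hBne, List.head?_eq_head hBne]; rfl)).symm
  have hChainrB : rB.Chain' (fun x y => x.2 = y.1) := by
    rw [hrB, List.Chain', List.isChain_reverse, List.isChain_map]
    exact hCB.imp (fun x y h => by simp [Function.flip_def, Prod.swap, h])
  set w' : List (V × V) := A ++ (rB ++ C) with hw'
  have hw'chain : w'.Chain' (fun x y => x.2 = y.1) := by
    rw [hw', List.Chain', List.isChain_append, List.isChain_append]
    refine ⟨hCA, ⟨hChainrB, hCC, ?_⟩, ?_⟩
    · intro x hx y hy
      rw [hrBlast] at hx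
      simp at hx
      subst hx
      simp [hBhead1]
      exact hlink4 y hy
    · intro x hx y hy
      rw [List.head?_append_of_ne_nil _ hrBne, hrBhead] at hy
      simp only [Option.mem_def, Option.some_inj] at hy
      subst hy
      simpa [hBlast2] using hlink1 x hx a rfl
  have hmem_rB : ∀ c ∈ B, Prod.swap c ∈ w' := fun c hc =>
    List.mem_append.mpr (Or.inr (List.mem_append.mpr (Or.inl
      (List.mem_reverse.mpr (List.mem_map.mpr ⟨c, hc, rfl⟩)))))
  have hw'adj : ∀ b ∈ w', G.Adj b.1 b.2 := by
    intro b hb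
    rw [hw'] at hb
    simp only [List.mem_append, hrB, List.mem_reverse, List.mem_map] at hb
    rcases hb with hb | ⟨c, hc, rfl⟩ | hb
    · exact h4 b (by rw [hweq]; simp [hb])
    · exact (h4 c (by rw [hweq]; simp [hc])).symm
    · exact h4 b (by rw [hweq]; simp [hb])
  have hw'head : w'.head?.map Prod.fst = some s := by
    rcases A with _ | ⟨x, A'⟩
    · have hs : a.1 = s := by rw [hweq] at h1; simpa using h1
      rw [hw']
      simp only [List.nil_append]
      rw [List.head?_append_of_ne_nil _ hrBne, hrBhead]
      simpa [hBlast2] using hs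
    · rw [hweq] at h1
      simp only [List.cons_append, List.head?_cons, Option.map_some] at h1
      simpa [hw'] using h1
  have hw'last : w'.getLast?.map Prod.snd = some s := by
    rcases C with _ | ⟨y, C'⟩
    · have hs : a.2 = s := by
        rw [hweq, show A ++ a :: (B ++ a :: []) = (A ++ a :: B) ++ [a] by simp,
          List.getLast?_concat] at h2
        simpa using h2
      rw [hw']
      rw [List.getLast?_append_of_ne_nil _ (by simp [hrBne] : rB ++ [] ≠ [])]
      rw [List.append_nil, hrBlast]
      simpa [hBhead1] using hs
    · have hC : (y :: C').getLast? = some ((y :: C').getLast (by simp)) :=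
        List.getLast?_eq_getLast (by simp)
      have h2' : ((y :: C').getLast (by simp)).2 = s := by
        rw [hweq] at h2
        rw [List.getLast?_append_of_ne_nil _ (by simp : a :: (B ++ a :: y :: C') ≠ [])] at h2
        rw [show a :: (B ++ a :: y :: C') = (a :: (B ++ [a])) ++ (y :: C') by simp] at h2
        rw [List.getLast?_append_of_ne_nil _ (by simp : (y :: C') ≠ []), hC] at h2
        simpa using h2
      rw [hw']
      rw [List.getLast?_append_of_ne_nil _ (by simp : rB ++ y :: C' ≠ [])]
      rw [List.getLast?_append_of_ne_nil _ (by simp : (y :: C') ≠ []), hC]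
      simpa using h2'
  have hvis' : ∀ v ∈ VR, WalkVisits w' v := by
    intro v hv
    obtain ⟨b, hb, hvb⟩ := hvis v hv
    rw [hweq] at hb
    have hacase : v = a.1 ∨ v = a.2 → WalkVisits w' v := by
      rintro (rfl | rfl)
      · exact ⟨Prod.swap (B.getLast hBne), hmem_rB _ (List.getLast_mem hBne),
          Or.inl hBlast2.symm⟩
      · exact ⟨Prod.swap (B.head hBne), hmem_rB _ (List.head_mem hBne),
          Or.inr hBhead1.symm⟩
    simp only [List.mem_append, List.mem_cons] at hb
    rcases hb with hb | rfl | hb | rfl | hb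
    · exact ⟨b, List.mem_append.mpr (Or.inl hb), hvb⟩
    · exact hacase hvb
    · rcases hvb with rfl | rfl
      · exact ⟨Prod.swap b, hmem_rB _ hb, Or.inr rfl⟩
      · exact ⟨Prod.swap b, hmem_rB _ hb, Or.inl rfl⟩
    · exact hacase hvb
    · exact ⟨b, List.mem_append.mpr (Or.inr (List.mem_append.mpr (Or.inr hb))), hvb⟩
  have hlen : walkLength d w' + 2 * d a.1 a.2 = walkLength d w := by
    have hmapeq : (List.map ((fun a : V × V => d a.1 a.2) ∘ Prod.swap) B).sum
        = (List.map (fun a : V × V => d a.1 a.2) B).sum := by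
      congr 1
      exact List.map_congr_left (fun c _ => hd_symm _ _)
    simp only [hw', hweq, walkLength, List.map_append, List.sum_append, List.map_cons,
      List.sum_cons, hrB, List.map_reverse, List.sum_reverse, List.map_map]
    rw [hmapeq]
    ring
  have hle := hmin w' ⟨hw'head, hw'last, hw'chain, hw'adj⟩ hvis'
  have hpos := hd_pos a.1 a.2 hadj
  linarith
end

section
/- In a single-block warehouse graph, if a tour r contains as a contiguous segment the subpath u_i v_{i1} v_{i2} … v_{i s_i} d_i v_{i s_i} v_{i(s_i−1)} … v_{i1} u_i for some aisle i (i.e., it goes down the full aisle and immediately back up), then there exists a tour r' that is better than r. -/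
namespace SingleBlock

/-- Vertices of a single-block warehouse with `n` aisles, where aisle `i`
contains `sz i + 1` picking vertices: `Sum.inl (Sum.inl i)` is the artificial
vertex `u i` on the top cross-aisle, `Sum.inl (Sum.inr i)` is the artificial
vertex `d i` on the bottom cross-aisle, and `Sum.inr ⟨i, k⟩` is the picking
vertex `v i k` (numbered from north to south). -/
abbrev SBV (n : ℕ) (sz : Fin n → ℕ) : Type :=
  (Fin n ⊕ Fin n) ⊕ ((i : Fin n) × Fin (sz i + 1))

variable {n : ℕ} {sz : Fin n → ℕ}

/-- the artificial vertex `u i` on the top cross-aisle -/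
def top (i : Fin n) : SBV n sz := Sum.inl (Sum.inl i)

/-- the artificial vertex `d i` on the bottom cross-aisle -/
def bot (i : Fin n) : SBV n sz := Sum.inl (Sum.inr i)

/-- the picking vertex `v i k` -/
def pk (i : Fin n) (k : Fin (sz i + 1)) : SBV n sz := Sum.inr ⟨i, k⟩

/-- `v` is a picking vertex -/
def IsPick (v : SBV n sz) : Prop := ∃ i k, v = pk i k

/-- the aisle path `u_i — v_{i1} — ⋯ — v_{i s_i} — d_i` of aisle `i`,
as a list of vertices from north to south -/
def aislePath (i : Fin n) : List (SBV n sz) :=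
  top i :: ((List.ofFn fun k : Fin (sz i + 1) => pk i k) ++ [bot i])

/-- `x` and `y` occur consecutively (in this order) in the list `l` -/
def adjIn {α : Type*} (l : List α) (x y : α) : Prop :=
  ∃ p : ℕ, l[p]? = some x ∧ l[p + 1]? = some y

/-- adjacency in the single-block warehouse graph: neighboring artificial
vertices along the two cross-aisles, and consecutive vertices along each aisle
path -/
def Adj (x y : SBV n sz) : Prop :=
  (∃ i j : Fin n, (j : ℕ) = (i : ℕ) + 1 ∧
    ((x = top i ∧ y = top j) ∨ (x = top j ∧ y = top i) ∨
     (x = bot i ∧ y = bot j) ∨ (x = bot j ∧ y = bot i))) ∨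
  (∃ i, adjIn (aislePath i) x y ∨ adjIn (aislePath i) y x)

/-- the length of a walk, written as a list of vertices: the sum of the lengths
of its edges, counted with multiplicity -/
noncomputable def pathLen {α : Type*} (len : α → α → ℝ) (r : List α) : ℝ :=
  ((r.zip r.tail).map fun p => len p.1 p.2).sum

/-- a tour: a closed walk starting and ending at `s` -/
def IsTourFrom (s : SBV n sz) (r : List (SBV n sz)) : Prop :=
  r.head? = some s ∧ r.getLast? = some s ∧ r.Chain' Adj

/-- the tour `r'` is better than the tour `r`: every picking vertex visited by
`r` is also visited by `r'`, and `r'` is strictly shorter than `r` -/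
def Better (len : SBV n sz → SBV n sz → ℝ) (r' r : List (SBV n sz)) : Prop :=
  (∀ v, IsPick v → v ∈ r → v ∈ r') ∧ pathLen len r' < pathLen len r

/-- number of contiguous occurrences of `seg` in `r` -/
def occCount {α : Type*} [DecidableEq α] (seg r : List α) : ℕ :=
  ((List.range r.length).filter fun p => seg.isPrefixOf (r.drop p)).length


section Aux

variable {α : Type*} (len : α → α → ℝ)

/-- the length of the junction edge between the end of `a` and the start of `b` -/
noncomputable def glue (a b : List α) : ℝ :=
  match a.getLast?, b.head? with
  | some x, some y => len x y
  | _, _ => 0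

lemma glue_congr {a a' b b' : List α} (h1 : a.getLast? = a'.getLast?)
    (h2 : b.head? = b'.head?) : glue len a b = glue len a' b' := by
  unfold glue; rw [h1, h2]

lemma pathLen_cons (x : α) (l : List α) :
    pathLen len (x :: l) = glue len [x] l + pathLen len l := by
  cases l with
  | nil => simp [pathLen, glue]
  | cons y t => simp [pathLen, glue, List.zip_cons_cons]

lemma pathLen_append (a b : List α) :
    pathLen len (a ++ b) = pathLen len a + glue len a b + pathLen len b := by
  induction a with
  | nil =>
      simp [pathLen, glue]
  | cons x a ih =>
      rw [List.cons_append, pathLen_cons, ih, pathLen_cons]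
      have key : glue len [x] (a ++ b) + glue len a b
          = glue len [x] a + glue len (x :: a) b := by
        cases a with
        | nil => simp [glue]
        | cons y a' =>
            have h1 : ((x :: y :: a') : List α).getLast? = (y :: a').getLast? :=
              List.getLast?_cons_cons ..
            have h2 : (([x] : List α) ++ (y :: a' ++ b)).head? = ([x] : List α).head? := rfl
            unfold glue
            rw [h1]
            simp
      linarith [key]

end Aux

/-- Lemma 1: in a single-block warehouse graph (with symmetric positive edge
lengths, corresponding top and bottom cross-aisle edges of equal length, and
all aisle paths of equal total length), if a tour `r` contains as a contiguous
segment the subpath `u_i v_{i1} v_{i2} … v_{i s_i} d_i v_{i s_i} … v_{i1} u_i`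
for some aisle `i` (going down the full aisle and immediately back up), then
there exists a tour `r'` that is better than `r`. -/
theorem down_and_back_up_not_optimal
    {n : ℕ} {sz : Fin (n + 1) → ℕ}
    (len : SBV (n + 1) sz → SBV (n + 1) sz → ℝ)
    (hsymm : ∀ x y, len x y = len y x)
    (hpos : ∀ x y, Adj x y → 0 < len x y)
    (hcross : ∀ i j : Fin (n + 1), (j : ℕ) = (i : ℕ) + 1 →
      len (top i) (top j) = len (bot i) (bot j))
    (haisle : ∀ i i' : Fin (n + 1),
      pathLen len (aislePath i) = pathLen len (aislePath i'))
    (r : List (SBV (n + 1) sz)) (hr : IsTourFrom (top 0) r)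
    (i : Fin (n + 1))
    (hseg : (aislePath i ++ (aislePath i).reverse.tail) <:+: r) :
    ∃ r', IsTourFrom (top 0) r' ∧ Better len r' r := by
  classical
  obtain ⟨pre, suf, hps⟩ := hseg
  set P : List (SBV (n + 1) sz) := List.ofFn (fun k : Fin (sz i + 1) => pk i k) with hPdef
  have hPne : P ≠ [] := by
    simp [hPdef]
  set vs := P.getLast hPne with hvs
  set P' := P.dropLast with hP'def
  have hPsplit : P = P' ++ [vs] := (List.dropLast_append_getLast hPne).symm
  -- decompose the doubled aisle segment
  have hseg_eq : aislePath i ++ (aislePath (sz := sz) i).reverse.tail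
      = (top i :: P') ++ ([vs, bot i, vs] ++ (P'.reverse ++ [top i])) := by
    have hA : aislePath (sz := sz) i = top i :: (P ++ [bot i]) := rfl
    rw [hA, hPsplit]
    simp [List.reverse_append]
  set C : List (SBV (n + 1) sz) := pre ++ (top i :: P') with hCdef
  set E : List (SBV (n + 1) sz) := (P'.reverse ++ [top i]) ++ suf with hEdef
  have hrEq : r = C ++ ([vs, bot i, vs] ++ E) := by
    rw [← hps, hseg_eq, hCdef, hEdef]
    simp [List.append_assoc]
  have hCne : C ≠ [] := by simp [hCdef]
  have hEne : E ≠ [] := by simp [hEdef]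
  clear_value C E
  clear_value vs
  set r' : List (SBV (n + 1) sz) := C ++ ([vs] ++ E) with hr'def
  clear_value r'
  obtain ⟨hhead, hlast, hchain⟩ := hr
  -- chain decomposition of r
  rw [hrEq] at hchain
  rw [List.Chain', List.isChain_append] at hchain
  obtain ⟨hchC, hchME, hjC⟩ := hchain
  rw [List.isChain_append] at hchME
  obtain ⟨hchM, hchE, hjME⟩ := hchME
  have hAdj1 : Adj vs (bot i) := by
    have := hchM
    simp [List.isChain_cons_cons] at this
    exact this.1
  have hAdj2 : Adj (bot (sz := sz) i) vs := by
    have := hchM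
    simp [List.isChain_cons_cons] at this
    exact this.2
  have hc : C.head? = some (C.head hCne) := List.head?_eq_head hCne
  have he : E.getLast? = some (E.getLast hEne) := List.getLast?_eq_getLast hEne
  refine ⟨r', ⟨?_, ?_, ?_⟩, ?_, ?_⟩
  · -- head
    rw [hrEq, List.head?_append, hc] at hhead
    rw [hr'def, List.head?_append, hc]
    simpa using hhead
  · -- last
    rw [hrEq, List.getLast?_append, List.getLast?_append, he] at hlast
    rw [hr'def, List.getLast?_append, List.getLast?_append, he]
    simpa using hlast
  · -- chain
    rw [hr'def, List.Chain', List.isChain_append, List.isChain_append]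
    refine ⟨hchC, ⟨List.isChain_singleton _, hchE, ?_⟩, ?_⟩
    · intro x hx y hy
      have hx' : vs = x := by simpa using hx
      subst hx'
      exact hjME vs (by simp) y hy
    · intro x hx y hy
      have hy' : vs = y := by simpa using hy
      subst hy'
      exact hjC x hx vs (by simp)
  · -- picking vertices preserved
    intro v hv hmem
    rw [hrEq] at hmem
    rw [hr'def]
    simp only [List.mem_append, List.mem_cons, List.mem_singleton,
      List.not_mem_nil, or_false] at hmem ⊢
    rcases hmem with h | h | h
    · exact Or.inl h
    · rcases h with h | h | h
      · exact Or.inr (Or.inl h)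
      · obtain ⟨j, k, rfl⟩ := hv
        exact absurd h (by simp [pk, bot])
      · exact Or.inr (Or.inl h)
    · exact Or.inr (Or.inr h)
  · -- strictly shorter
    rw [hrEq, hr'def]
    rw [pathLen_append, pathLen_append, pathLen_append, pathLen_append]
    have hg1 : glue len C ([vs, bot i, vs] ++ E) = glue len C ([vs] ++ E) :=
      glue_congr len rfl rfl
    have hg2 : glue len [vs, bot i, vs] E = glue len [vs] E :=
      glue_congr len rfl rfl
    have hM : pathLen len [vs, bot i, vs] = len vs (bot i) + len (bot i) vs := by
      simp [pathLen, List.zip_cons_cons]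
    have hM' : pathLen len ([vs] : List (SBV (n + 1) sz)) = 0 := by
      simp [pathLen]
    have h1 : 0 < len vs (bot i) := hpos _ _ hAdj1
    have h2 : 0 < len (bot i) vs := hpos _ _ hAdj2
    rw [hg1, hg2, hM, hM']
    linarith

end SingleBlock
end

section
/- In a two-block warehouse graph under no-reversal routing, assume subaisle 1 ∈ K1, |K1| is odd and |K2| is even (with K2 nonempty). Then no no-reversal tour traverses every subaisle of K1 ∪ K2 at least once with total vertical distance equal to |K1 ∪ K2| · d; equivalently, every such tour has l_r ≥ (|K1 ∪ K2| + 1) · d. -/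
namespace TwoBlock

/-- Vertices of a two-block warehouse with `n` vertical aisles and three
horizontal cross-aisles (`0` = top, `1` = middle, `2` = bottom).  Each aisle
`i` is split by the middle cross-aisle into a top subaisle `(i,0)` and a
bottom subaisle `(i,1)`; subaisle `(i,j)` contains `m i j + 1` picking
vertices.  `Sum.inl (i, j)` is the artificial vertex at aisle `i` on
cross-aisle `j`; `Sum.inr ⟨i, j, k⟩` is the `k`-th picking vertex (from north
to south) of subaisle `(i,j)`. -/
abbrev TBV (n : ℕ) (m : Fin n → Fin 2 → ℕ) : Type :=
  (Fin n × Fin 3) ⊕ ((i : Fin n) × (j : Fin 2) × Fin (m i j + 1))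

variable {n : ℕ} {m : Fin n → Fin 2 → ℕ}

/-- the artificial vertex at aisle `i` on cross-aisle `j` -/
def art (i : Fin n) (j : Fin 3) : TBV n m := Sum.inl (i, j)

/-- the `k`-th picking vertex of subaisle `(i,j)` -/
def pk (i : Fin n) (j : Fin 2) (k : Fin (m i j + 1)) : TBV n m := Sum.inr ⟨i, j, k⟩

/-- `v` is a picking vertex -/
def IsPick (v : TBV n m) : Prop := ∃ i j k, v = pk i j k

/-- the full path through subaisle `(i,j)` from its northern endpoint to its
southern endpoint -/
def subPath (i : Fin n) (j : Fin 2) : List (TBV n m) :=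
  art i j.castSucc :: ((List.ofFn fun k : Fin (m i j + 1) => pk i j k) ++ [art i j.succ])

/-- `x` and `y` occur consecutively (in this order) in the list `l` -/
def adjIn {α : Type*} (l : List α) (x y : α) : Prop :=
  ∃ p : ℕ, l[p]? = some x ∧ l[p + 1]? = some y

/-- adjacency in the two-block warehouse graph: neighboring artificial
vertices along each of the three cross-aisles, and consecutive vertices along
each subaisle path -/
def Adj (x y : TBV n m) : Prop :=
  (∃ (i i' : Fin n) (j : Fin 3), (i' : ℕ) = (i : ℕ) + 1 ∧
    ((x = art i j ∧ y = art i' j) ∨ (x = art i' j ∧ y = art i j))) ∨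
  (∃ i j, adjIn (subPath i j) x y ∨ adjIn (subPath i j) y x)

/-- the length of a walk, written as a list of vertices: the sum of the
lengths of its edges, counted with multiplicity -/
noncomputable def pathLen {α : Type*} (len : α → α → ℝ) (r : List α) : ℝ :=
  ((r.zip r.tail).map fun p => len p.1 p.2).sum

/-- a tour: a closed walk starting and ending at `s` -/
def IsTourFrom (s : TBV n m) (r : List (TBV n m)) : Prop :=
  r.head? = some s ∧ r.getLast? = some s ∧ r.Chain' Adj

/-- the full path through subaisle `(i,j)` in the direction `dir`
(`true` = from north to south, `false` = from south to north) -/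
def dirPath (i : Fin n) (j : Fin 2) (dir : Bool) : List (TBV n m) :=
  if dir then subPath i j else (subPath i j).reverse

/-- the tour `r` performs a full traversal of subaisle `(i,j)` in direction
`dir` starting at position `q` -/
def TravAt (r : List (TBV n m)) (q : ℕ) (i : Fin n) (j : Fin 2) (dir : Bool) : Prop :=
  dirPath i j dir <+: r.drop q

/-- `r` is a no-reversal tour: whenever it enters a subaisle it traverses it
completely from one endpoint to the other, i.e. every occurrence of a picking
vertex lies inside a contiguous full traversal of its subaisle -/
def NoReversal (r : List (TBV n m)) : Prop :=
  ∀ (p : ℕ) (i : Fin n) (j : Fin 2) (k : Fin (m i j + 1)),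
    r[p]? = some (pk i j k) →
      ∃ q dir, TravAt r q i j dir ∧ q ≤ p ∧ p < q + (subPath (m := m) i j).length

/-- the tour `r` traverses subaisle `(i,j)` (at least once) -/
def Traverses (r : List (TBV n m)) (i : Fin n) (j : Fin 2) : Prop :=
  ∃ q dir, TravAt r q i j dir

/-- `K1` (resp. `K2`) is the set of aisles whose top (resp. bottom) subaisle
contains a required picking vertex; `r` traverses every required subaisle at
least once -/
def TraversesAll (K1 K2 : Finset (Fin n)) (r : List (TBV n m)) : Prop :=
  (∀ a ∈ K1, Traverses r a 0) ∧ (∀ a ∈ K2, Traverses r a 1)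

/-- `v` is a picking vertex (Boolean version) -/
def isPickV : TBV n m → Bool := fun v =>
  match v with
  | Sum.inr _ => true
  | Sum.inl _ => false

/-- the total vertical distance of a tour: the sum of the lengths of all
subaisle (vertical) edges it traverses, counted with multiplicity -/
noncomputable def vertLen (len : TBV n m → TBV n m → ℝ) (r : List (TBV n m)) : ℝ :=
  ((r.zip r.tail).map fun p =>
    if isPickV p.1 || isPickV p.2 then len p.1 p.2 else 0).sum

/-- number of contiguous occurrences of `seg` in `r` -/
def occCount {α : Type*} [DecidableEq α] (seg r : List α) : ℕ :=
  ((List.range r.length).filter fun p => seg.isPrefixOf (r.drop p)).length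


section Aux

variable {n : ℕ} {m : Fin n → Fin 2 → ℕ}

lemma prefix_getElem? {α : Type*} {x y : List α} (h : x <+: y) {t : ℕ} (ht : t < x.length) :
    y[t]? = x[t]? := by
  obtain ⟨s, rfl⟩ := h
  simp [List.getElem?_append, ht]

lemma art_ne_pk (i i' : Fin n) (j : Fin 3) (j' : Fin 2) (k : Fin (m i' j' + 1)) :
    (art i j : TBV n m) ≠ pk i' j' k := by
  simp [art, pk]

lemma pk_inj {i i' : Fin n} {j j' : Fin 2} {k : Fin (m i j + 1)} {k' : Fin (m i' j' + 1)}
    (h : (pk i j k : TBV n m) = pk i' j' k') : i = i' ∧ j = j' ∧ (k : ℕ) = (k' : ℕ) := by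
  simp only [pk, Sum.inr.injEq] at h
  obtain ⟨rfl, h⟩ := Sigma.mk.inj_iff.mp h
  rw [heq_iff_eq] at h
  obtain ⟨rfl, h⟩ := Sigma.mk.inj_iff.mp h
  rw [heq_iff_eq] at h
  exact ⟨rfl, rfl, congrArg Fin.val h⟩

lemma art_inj {i i' : Fin n} {j j' : Fin 3} (h : (art i j : TBV n m) = art i' j') :
    i = i' ∧ j = j' := by
  simp only [art, Sum.inl.injEq, Prod.mk.injEq] at h
  exact h

@[simp] lemma subPath_length (i : Fin n) (j : Fin 2) :
    (subPath (m := m) i j).length = m i j + 3 := by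
  simp [subPath]

@[simp] lemma dirPath_length (i : Fin n) (j : Fin 2) (dir : Bool) :
    (dirPath (m := m) i j dir).length = m i j + 3 := by
  cases dir <;> simp [dirPath]

lemma subPath_get_zero (i : Fin n) (j : Fin 2) :
    (subPath (m := m) i j)[0]? = some (art i j.castSucc) := by
  rw [subPath, List.getElem?_cons_zero]

lemma subPath_get_pk (i : Fin n) (j : Fin 2) {t : ℕ} (ht : t < m i j + 1) :
    (subPath (m := m) i j)[t + 1]? = some (pk i j ⟨t, ht⟩) := by
  rw [subPath, List.getElem?_cons_succ, List.getElem?_append,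
    if_pos (by simpa using ht), List.getElem?_ofFn]
  simp [List.ofFnNthVal, ht]

lemma subPath_get_last (i : Fin n) (j : Fin 2) :
    (subPath (m := m) i j)[m i j + 2]? = some (art i j.succ) := by
  simp [subPath, List.getElem?_append]

lemma subPath_get_eq_pk {i i' : Fin n} {j j' : Fin 2} {t : ℕ} {k' : Fin (m i' j' + 1)}
    (h : (subPath (m := m) i j)[t]? = some (pk i' j' k')) :
    i' = i ∧ j' = j ∧ t = (k' : ℕ) + 1 := by
  rcases t with _ | s
  · rw [subPath_get_zero] at h
    exact absurd (Option.some_inj.mp h) (art_ne_pk _ _ _ _ _)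
  rcases lt_or_ge s (m i j + 1) with hs | hs
  · rw [subPath_get_pk i j hs] at h
    obtain ⟨h1, h2, h3⟩ := pk_inj (Option.some_inj.mp h)
    have h3' : s = (k' : ℕ) := h3
    exact ⟨h1.symm, h2.symm, by omega⟩
  rcases Nat.eq_or_lt_of_le hs with hs' | hs'
  · rw [show s + 1 = m i j + 2 by omega, subPath_get_last] at h
    exact absurd (Option.some_inj.mp h) (art_ne_pk _ _ _ _ _)
  · rw [List.getElem?_eq_none (by rw [subPath_length]; omega)] at h
    exact absurd h (by simp)

lemma dirPath_false_get (i : Fin n) (j : Fin 2) {t : ℕ} (ht : t < m i j + 3) :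
    (dirPath (m := m) i j false)[t]? = (subPath (m := m) i j)[m i j + 2 - t]? := by
  rw [show (dirPath (m := m) i j false) = (subPath i j).reverse from rfl,
    List.getElem?_reverse (by rw [subPath_length]; omega)]
  congr 1
  rw [subPath_length]
  omega

lemma dirPath_get_eq_pk {i i' : Fin n} {j j' : Fin 2} {dir : Bool} {t : ℕ}
    {k' : Fin (m i' j' + 1)}
    (h : (dirPath (m := m) i j dir)[t]? = some (pk i' j' k')) :
    i' = i ∧ j' = j ∧ t = (if dir then (k' : ℕ) + 1 else m i j + 1 - (k' : ℕ)) := by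
  have ht : t < m i j + 3 := by
    by_contra hc
    rw [List.getElem?_eq_none (by rw [dirPath_length]; omega)] at h
    exact absurd h (by simp)
  cases dir
  · rw [dirPath_false_get i j ht] at h
    obtain ⟨h1, h2, h3⟩ := subPath_get_eq_pk h
    subst h1; subst h2
    have := k'.isLt
    refine ⟨rfl, rfl, by simp; omega⟩
  · obtain ⟨h1, h2, h3⟩ := subPath_get_eq_pk h
    exact ⟨h1, h2, by simpa using h3⟩

lemma TravAt.get {r : List (TBV n m)} {q : ℕ} {i : Fin n} {j : Fin 2} {dir : Bool}
    (h : TravAt r q i j dir) {t : ℕ} (ht : t < m i j + 3) :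
    r[q + t]? = (dirPath (m := m) i j dir)[t]? := by
  have := prefix_getElem? h (t := t) (by rw [dirPath_length]; omega)
  rwa [List.getElem?_drop] at this

lemma TravAt.add_le_length {r : List (TBV n m)} {q : ℕ} {i : Fin n} {j : Fin 2} {dir : Bool}
    (h : TravAt r q i j dir) : q + (m i j + 3) ≤ r.length := by
  have h1 := h.length_le
  rw [dirPath_length, List.length_drop] at h1
  omega


lemma dirPath_get_pk (i : Fin n) (j : Fin 2) (dir : Bool) {t : ℕ}
    (h1 : 1 ≤ t) (h2 : t ≤ m i j + 1) :
    ∃ k : Fin (m i j + 1), (dirPath (m := m) i j dir)[t]? = some (pk i j k) ∧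
      (k : ℕ) = (if dir then t - 1 else m i j + 1 - t) := by
  cases dir
  · rw [dirPath_false_get i j (by omega),
      show m i j + 2 - t = (m i j + 1 - t) + 1 by omega,
      subPath_get_pk i j (by omega)]
    exact ⟨_, rfl, by simp⟩
  · rw [show (dirPath (m := m) i j true) = subPath i j from rfl,
      show t = (t - 1) + 1 by omega, subPath_get_pk i j (by omega)]
    exact ⟨_, rfl, by simp⟩

lemma TravAt.get_pk {r : List (TBV n m)} {q : ℕ} {i : Fin n} {j : Fin 2} {dir : Bool}
    (h : TravAt r q i j dir) {t : ℕ} (h1 : 1 ≤ t) (h2 : t ≤ m i j + 1) :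
    ∃ k : Fin (m i j + 1), r[q + t]? = some (pk i j k) ∧
      (k : ℕ) = (if dir then t - 1 else m i j + 1 - t) := by
  rw [h.get (by omega)]
  exact dirPath_get_pk i j dir h1 h2

lemma cover_eq {r : List (TBV n m)} {p q : ℕ} {i i0 : Fin n} {j j0 : Fin 2} {dir : Bool}
    {k : Fin (m i j + 1)}
    (hpk : r[p]? = some (pk i j k)) (hT : TravAt r q i0 j0 dir)
    (h1 : q ≤ p) (h2 : p < q + (m i0 j0 + 3)) :
    i = i0 ∧ j = j0 ∧ q + (if dir then (k : ℕ) + 1 else m i0 j0 + 1 - (k : ℕ)) = p := by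
  rw [show p = q + (p - q) by omega, hT.get (by omega)] at hpk
  obtain ⟨hi, hj, ht⟩ := dirPath_get_eq_pk hpk
  refine ⟨hi, hj, ?_⟩
  cases dir <;> simp only [if_true, if_false, Bool.false_eq_true] at ht ⊢ <;> omega

lemma cover_not_both {r : List (TBV n m)} {p q q' : ℕ} {i : Fin n} {j : Fin 2}
    {k : Fin (m i j + 1)}
    (hA : TravAt r q i j true) (hqA : q + ((k : ℕ) + 1) = p)
    (hB : TravAt r q' i j false) (hqB : q' + (m i j + 1 - (k : ℕ)) = p) : False := by
  have hk : (k : ℕ) < m i j + 1 := k.isLt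
  have e1 : r[p + 1]? = (subPath (m := m) i j)[(k : ℕ) + 2]? := by
    have h := hA.get (t := (k : ℕ) + 2) (by omega)
    rw [show q + ((k : ℕ) + 2) = p + 1 by omega] at h
    rw [h]; rfl
  have e2 : r[p + 1]? = (subPath (m := m) i j)[(k : ℕ)]? := by
    have h := hB.get (t := m i j + 2 - (k : ℕ)) (by omega)
    rw [show q' + (m i j + 2 - (k : ℕ)) = p + 1 by omega] at h
    rw [h, dirPath_false_get i j (by omega)]
    congr 1; omega
  rw [e1] at e2
  rcases Nat.eq_zero_or_pos (k : ℕ) with h0 | h0 <;>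
    rcases Nat.lt_or_ge (k : ℕ) (m i j) with hm | hm
  · have e3 : (subPath (m := m) i j)[(k : ℕ) + 2]? = some (pk i j ⟨(k : ℕ) + 1, by omega⟩) := by
      rw [show (k : ℕ) + 2 = ((k : ℕ) + 1) + 1 by omega, subPath_get_pk i j (by omega)]
    have e4 : (subPath (m := m) i j)[(k : ℕ)]? = some (art i j.castSucc) := by
      rw [h0, subPath_get_zero]
    rw [e3, e4] at e2
    exact art_ne_pk _ _ _ _ _ (Option.some_inj.mp e2).symm
  · have e3 : (subPath (m := m) i j)[(k : ℕ) + 2]? = some (art i j.succ) := by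
      rw [show (k : ℕ) + 2 = m i j + 2 by omega, subPath_get_last]
    have e4 : (subPath (m := m) i j)[(k : ℕ)]? = some (art i j.castSucc) := by
      rw [h0, subPath_get_zero]
    rw [e3, e4] at e2
    obtain ⟨-, hj⟩ := art_inj (Option.some_inj.mp e2)
    have := congrArg Fin.val hj
    rw [Fin.val_succ, Fin.coe_castSucc] at this
    omega
  · have e3 : (subPath (m := m) i j)[(k : ℕ) + 2]? = some (pk i j ⟨(k : ℕ) + 1, by omega⟩) := by
      rw [show (k : ℕ) + 2 = ((k : ℕ) + 1) + 1 by omega, subPath_get_pk i j (by omega)]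
    have e4 : (subPath (m := m) i j)[(k : ℕ)]? = some (pk i j ⟨(k : ℕ) - 1, by omega⟩) := by
      conv_lhs => rw [show (k : ℕ) = ((k : ℕ) - 1) + 1 by omega]
      rw [subPath_get_pk i j (by omega)]
    rw [e3, e4] at e2
    obtain ⟨-, -, hkk⟩ := pk_inj (Option.some_inj.mp e2)
    have hkk' : (k : ℕ) + 1 = (k : ℕ) - 1 := hkk
    omega
  · have e3 : (subPath (m := m) i j)[(k : ℕ) + 2]? = some (art i j.succ) := by
      rw [show (k : ℕ) + 2 = m i j + 2 by omega, subPath_get_last]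
    have e4 : (subPath (m := m) i j)[(k : ℕ)]? = some (pk i j ⟨(k : ℕ) - 1, by omega⟩) := by
      conv_lhs => rw [show (k : ℕ) = ((k : ℕ) - 1) + 1 by omega]
      rw [subPath_get_pk i j (by omega)]
    rw [e3, e4] at e2
    exact art_ne_pk _ _ _ _ _ (Option.some_inj.mp e2)

lemma cover_unique {r : List (TBV n m)} {p q q' : ℕ} {i i0 i1 : Fin n} {j j0 j1 : Fin 2}
    {d0 d1 : Bool} {k : Fin (m i j + 1)}
    (hpk : r[p]? = some (pk i j k))
    (hA : TravAt r q i0 j0 d0) (h1 : q ≤ p) (h2 : p < q + (m i0 j0 + 3))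
    (hB : TravAt r q' i1 j1 d1) (h1' : q' ≤ p) (h2' : p < q' + (m i1 j1 + 3)) :
    q = q' := by
  obtain ⟨he1, he2, hoA⟩ := cover_eq hpk hA h1 h2
  subst he1; subst he2
  obtain ⟨he1, he2, hoB⟩ := cover_eq hpk hB h1' h2'
  subst he1; subst he2
  have hk := k.isLt
  cases d0 <;> cases d1 <;>
    simp only [if_true, if_false, Bool.false_eq_true, if_neg, reduceIte] at hoA hoB
  · omega
  · exact (cover_not_both hB hoB hA hoA).elim
  · exact (cover_not_both hA hoA hB hoB).elim
  · omega

lemma travAt_sub_unique {r : List (TBV n m)} {q : ℕ} {i i' : Fin n} {j j' : Fin 2}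
    {dir dir' : Bool}
    (hA : TravAt r q i j dir) (hB : TravAt r q i' j' dir') : i = i' ∧ j = j' := by
  obtain ⟨k, hk, -⟩ := hA.get_pk (t := 1) le_rfl (by omega)
  obtain ⟨k', hk', -⟩ := hB.get_pk (t := 1) le_rfl (by omega)
  rw [hk] at hk'
  obtain ⟨h1, h2, -⟩ := pk_inj (Option.some_inj.mp hk')
  exact ⟨h1, h2⟩

lemma edge_cover_unique {r : List (TBV n m)} {p q q' : ℕ} {i i' : Fin n} {j j' : Fin 2}
    {dir dir' : Bool}
    (hA : TravAt r q i j dir) (hB : TravAt r q' i' j' dir')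
    (h1 : q ≤ p) (h2 : p ≤ q + (m i j + 1)) (h1' : q' ≤ p) (h2' : p ≤ q' + (m i' j' + 1)) :
    q = q' := by
  rcases le_total q q' with hqq | hqq
  · obtain ⟨k, hk, -⟩ := hB.get_pk (t := 1) le_rfl (by omega)
    exact cover_unique hk hA (by omega) (by omega) hB (by omega) (by omega)
  · obtain ⟨k, hk, -⟩ := hA.get_pk (t := 1) le_rfl (by omega)
    exact (cover_unique hk hB (by omega) (by omega) hA (by omega) (by omega)).symm


/-- indicator (in `ZMod 2`) of being an artificial vertex on the top cross-aisle -/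
def gTop : TBV n m → ZMod 2 := fun v =>
  match v with
  | Sum.inl (_, j) => if j = 0 then 1 else 0
  | Sum.inr _ => 0

@[simp] lemma gTop_pk (i : Fin n) (j : Fin 2) (k : Fin (m i j + 1)) :
    gTop (pk i j k : TBV n m) = 0 := rfl

@[simp] lemma gTop_art (i : Fin n) (j : Fin 3) :
    gTop (art i j : TBV n m) = if j = 0 then 1 else 0 := rfl

@[simp] lemma isPickV_pk (i : Fin n) (j : Fin 2) (k : Fin (m i j + 1)) :
    isPickV (pk i j k : TBV n m) = true := rfl

@[simp] lemma isPickV_art (i : Fin n) (j : Fin 3) :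
    isPickV (art i j : TBV n m) = false := rfl

lemma isPickV_eq_true {v : TBV n m} (h : isPickV v = true) : ∃ i j k, v = pk i j k := by
  match v with
  | Sum.inl _ => simp [isPickV] at h
  | Sum.inr ⟨i, j, k⟩ => exact ⟨i, j, k, rfl⟩

/-- conversion of a zip-with-tail sum into a `Finset.range` sum -/
lemma zipTailSum {α : Type*} {M : Type*} [AddCommMonoid M] (F : α → α → M) (dflt : α)
    (l : List α) :
    ((l.zip l.tail).map fun p => F p.1 p.2).sum
      = ∑ p ∈ Finset.range (l.length - 1), F (l.getD p dflt) (l.getD (p + 1) dflt) := by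
  induction l with
  | nil => simp
  | cons a l ih =>
    cases l with
    | nil => simp
    | cons b t =>
      rw [List.tail_cons, List.zip_cons_cons, List.map_cons, List.sum_cons]
      rw [show (a :: b :: t : List α).length - 1 = ((b :: t : List α).length - 1) + 1 by
        simp]
      rw [Finset.sum_range_succ']
      simp only [List.getD_cons_succ, List.getD_cons_zero]
      rw [List.tail_cons] at ih
      rw [ih, add_comm]
      simp only [List.getD_cons_succ]

lemma getD_of_getElem? {α : Type*} {l : List α} {t : ℕ} {x : α} (dflt : α)
    (h : l[t]? = some x) : l.getD t dflt = x := by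
  rw [List.getD_eq_getElem?_getD, h, Option.getD_some]

lemma dirPath_getD_art_left (i : Fin n) (j : Fin 2) (dir : Bool) (dflt : TBV n m) :
    (dirPath (m := m) i j dir).getD 0 dflt
      = art i (if dir then j.castSucc else j.succ) := by
  cases dir
  · refine getD_of_getElem? dflt ?_
    rw [dirPath_false_get i j (by omega)]
    simpa using subPath_get_last i j
  · exact getD_of_getElem? dflt (subPath_get_zero i j)

lemma dirPath_getD_art_right (i : Fin n) (j : Fin 2) (dir : Bool) (dflt : TBV n m) :
    (dirPath (m := m) i j dir).getD (m i j + 2) dflt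
      = art i (if dir then j.succ else j.castSucc) := by
  cases dir
  · refine getD_of_getElem? dflt ?_
    rw [dirPath_false_get i j (by omega)]
    simpa using subPath_get_zero i j
  · exact getD_of_getElem? dflt (subPath_get_last i j)

lemma dirPath_pick_cond (i : Fin n) (j : Fin 2) (dir : Bool) (dflt : TBV n m) {t : ℕ}
    (ht : t < m i j + 2) :
    (isPickV ((dirPath (m := m) i j dir).getD t dflt)
      || isPickV ((dirPath (m := m) i j dir).getD (t + 1) dflt)) = true := by
  rcases Nat.eq_zero_or_pos t with h0 | h0
  · obtain ⟨k, hk, -⟩ := dirPath_get_pk i j dir (t := 1) le_rfl (by omega)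
    rw [h0, getD_of_getElem? dflt hk]
    simp
  · obtain ⟨k, hk, -⟩ := dirPath_get_pk (m := m) i j dir (t := t) h0 (by omega)
    rw [getD_of_getElem? dflt hk]
    simp

/-- the sum of the edge lengths along a full traversal equals `d` -/
lemma trav_edge_sum (len : TBV n m → TBV n m → ℝ) (d : ℝ)
    (hsymm : ∀ x y, len x y = len y x) (i : Fin n) (j : Fin 2)
    (hvert : pathLen len (subPath (m := m) i j) = d) (dir : Bool) (dflt : TBV n m) :
    ∑ t ∈ Finset.range (m i j + 2),
      len ((dirPath (m := m) i j dir).getD t dflt) ((dirPath i j dir).getD (t + 1) dflt)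
      = d := by
  have hsp : pathLen len (subPath (m := m) i j)
      = ∑ t ∈ Finset.range (m i j + 2),
        len ((subPath (m := m) i j).getD t dflt) ((subPath i j).getD (t + 1) dflt) := by
    rw [pathLen, zipTailSum len dflt, subPath_length,
      show m i j + 3 - 1 = m i j + 2 by omega]
  cases dir
  · have hrev : ∀ t : ℕ, t < m i j + 3 →
        (dirPath (m := m) i j false).getD t dflt = (subPath i j).getD (m i j + 2 - t) dflt := by
      intro t ht
      rw [List.getD_eq_getElem?_getD, List.getD_eq_getElem?_getD, dirPath_false_get i j ht]
    calc ∑ t ∈ Finset.range (m i j + 2),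
          len ((dirPath (m := m) i j false).getD t dflt) ((dirPath i j false).getD (t + 1) dflt)
        = ∑ t ∈ Finset.range (m i j + 2),
          len ((subPath (m := m) i j).getD (m i j + 1 - t) dflt)
            ((subPath i j).getD (m i j + 1 - t + 1) dflt) := by
          refine Finset.sum_congr rfl fun t ht => ?_
          rw [Finset.mem_range] at ht
          rw [hrev t (by omega), hrev (t + 1) (by omega), hsymm]
          congr 2 <;> omega
      _ = ∑ t ∈ Finset.range (m i j + 2),
          len ((subPath (m := m) i j).getD t dflt) ((subPath i j).getD (t + 1) dflt) := by
          have := Finset.sum_range_reflect (fun t =>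
            len ((subPath (m := m) i j).getD t dflt) ((subPath i j).getD (t + 1) dflt))
            (m i j + 2)
          rw [← this]
          refine Finset.sum_congr rfl fun t ht => ?_
          rw [Finset.mem_range] at ht
          congr 2 <;> omega
      _ = d := by rw [← hsp, hvert]
  · rw [show (dirPath (m := m) i j true) = subPath i j from rfl, ← hsp, hvert]

/-- the telescoping parity sum along a full traversal -/
lemma trav_parity_sum (i : Fin n) (j : Fin 2) (dir : Bool) (dflt : TBV n m) :
    ∑ t ∈ Finset.range (m i j + 2),
      (gTop ((dirPath (m := m) i j dir).getD (t + 1) dflt)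
        - gTop ((dirPath i j dir).getD t dflt))
      = (if j = 0 then 1 else 0 : ZMod 2) := by
  rw [Finset.sum_range_sub (fun t => gTop ((dirPath (m := m) i j dir).getD t dflt))]
  rw [dirPath_getD_art_right i j dir dflt, dirPath_getD_art_left i j dir dflt]
  have hsucc : (j.succ : Fin 3) ≠ 0 := by
    intro h
    have := congrArg Fin.val h
    rw [Fin.val_succ] at this
    simp at this
  have hcast : ((j.castSucc : Fin 3) = 0) ↔ j = 0 := by
    constructor
    · intro h
      have := congrArg Fin.val h
      rw [Fin.coe_castSucc] at this
      exact Fin.ext (by simpa using this)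
    · intro h; subst h; rfl
  cases dir
  · simp only [if_false, Bool.false_eq_true, gTop_art, if_neg hsucc, hcast]
    rw [sub_zero]
  · simp only [if_true, gTop_art, if_neg hsucc, hcast]
    rw [zero_sub, neg_eq_iff_eq_neg]
    rcases eq_or_ne j 0 with h | h
    · rw [if_pos h]; decide
    · rw [if_neg h]; decide


lemma getElem?_eq_getD {α : Type*} {l : List α} {p : ℕ} (dflt : α) (h : p < l.length) :
    l[p]? = some (l.getD p dflt) := by
  rw [List.getD_eq_getElem (l := l) dflt h, List.getElem?_eq_getElem h]

lemma subPath_adj {i : Fin n} {j : Fin 2} {t : ℕ} {x y : TBV n m}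
    (hx : (subPath (m := m) i j)[t]? = some x) (hy : (subPath (m := m) i j)[t + 1]? = some y) :
    Adj x y :=
  Or.inr ⟨i, j, Or.inl ⟨t, hx, hy⟩⟩

lemma gTop_eq_of_adj {x y : TBV n m} (h : Adj x y) (hx : isPickV x = false)
    (hy : isPickV y = false) : gTop x = gTop y := by
  rcases h with ⟨i, i', j, -, h⟩ | ⟨i, j, h⟩
  · rcases h with ⟨rfl, rfl⟩ | ⟨rfl, rfl⟩ <;> simp
  · have key : ∀ x y : TBV n m, adjIn (subPath (m := m) i j) x y →
        isPickV x = false → isPickV y = false → False := by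
      rintro x y ⟨t, hxt, hyt⟩ hx hy
      have htb : t + 1 < m i j + 3 := by
        by_contra hc
        rw [List.getElem?_eq_none (by rw [subPath_length]; omega)] at hyt
        exact absurd hyt (by simp)
      rcases Nat.lt_or_ge t (m i j + 1) with h1 | h1
      · rw [subPath_get_pk i j (by omega)] at hyt
        have := Option.some_inj.mp hyt
        rw [← this] at hy
        simp at hy
      · have ht : t = m i j + 1 := by omega
        subst ht
        rw [show m i j + 1 = m i j + 0 + 1 by omega, subPath_get_pk i j (by omega)] at hxt
        have := Option.some_inj.mp hxt
        rw [← this] at hx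
        simp at hx
    rcases h with h | h
    · exact (key x y h hx hy).elim
    · exact (key y x h hy hx).elim

lemma d_pos (len : TBV n m → TBV n m → ℝ) (hpos : ∀ x y : TBV n m, Adj x y → 0 < len x y)
    (i : Fin n) (j : Fin 2) : 0 < pathLen len (subPath (m := m) i j) := by
  rw [pathLen, zipTailSum len (art i 0), subPath_length,
    show m i j + 3 - 1 = m i j + 2 by omega]
  apply Finset.sum_pos
  · intro t ht
    rw [Finset.mem_range] at ht
    have hx := getElem?_eq_getD (l := subPath (m := m) i j) (art i 0)
      (by rw [subPath_length]; omega : t < (subPath (m := m) i j).length)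
    have hy := getElem?_eq_getD (l := subPath (m := m) i j) (art i 0)
      (by rw [subPath_length]; omega : t + 1 < (subPath (m := m) i j).length)
    exact hpos _ _ (subPath_adj hx hy)
  · exact ⟨0, by simp⟩

end Aux




/-- In a two-block warehouse graph (with symmetric positive edge lengths,
corresponding horizontal edges on the three cross-aisles of equal lengths, and
every subaisle of the same vertical length `d`) under no-reversal routing,
assume the topmost-left subaisle `1` belongs to `K1`, that `|K1|` is odd and
`|K2|` is even (with `K2` nonempty).  Then no no-reversal tour traverses every
subaisle of `K1 ∪ K2` at least once with total vertical distance equal to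
`|K1 ∪ K2| · d`; equivalently, every such tour has
`l_r ≥ (|K1 ∪ K2| + 1) · d`. -/
theorem no_tight_vertical_distance_tour
    {n : ℕ} {m : Fin (n + 1) → Fin 2 → ℕ}
    (len : TBV (n + 1) m → TBV (n + 1) m → ℝ) (d : ℝ)
    (hsymm : ∀ x y, len x y = len y x)
    (hpos : ∀ x y, Adj x y → 0 < len x y)
    (hcross : ∀ (i i' : Fin (n + 1)), (i' : ℕ) = (i : ℕ) + 1 →
      ∀ j j' : Fin 3, len (art i j) (art i' j) = len (art i j') (art i' j'))
    (hvert : ∀ i j, pathLen len (subPath i j) = d)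
    (K1 K2 : Finset (Fin (n + 1)))
    (h1 : (0 : Fin (n + 1)) ∈ K1) (hK2 : K2.Nonempty)
    (hodd : Odd K1.card) (heven : Even K2.card)
    (r : List (TBV (n + 1) m))
    (hr : IsTourFrom (art 0 0) r) (hnr : NoReversal r)
    (htrav : TraversesAll K1 K2 r) :
    vertLen len r ≠ ((K1.card + K2.card : ℕ) : ℝ) * d ∧
    (((K1.card + K2.card : ℕ) : ℝ) + 1) * d ≤ vertLen len r := by
  classical
  obtain ⟨hhead, hlast, hchain⟩ := hr
  set dflt : TBV (n + 1) m := art 0 0 with hdflt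
  set v : ℕ → TBV (n + 1) m := fun p => r.getD p dflt with hv
  set N := r.length with hN
  -- choice of a traversal at each traversal start
  have hex : ∀ q : ℕ, ∃ (i : Fin (n + 1)) (j : Fin 2) (dir : Bool),
      (∃ (i' : Fin (n + 1)) (j' : Fin 2) (dir' : Bool), TravAt r q i' j' dir') →
        TravAt r q i j dir := by
    intro q
    by_cases h : ∃ (i' : Fin (n + 1)) (j' : Fin 2) (dir' : Bool), TravAt r q i' j' dir'
    · obtain ⟨i, j, dir, h⟩ := h
      exact ⟨i, j, dir, fun _ => h⟩
    · exact ⟨0, 0, true, fun hc => absurd hc h⟩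
  choose I J D hIJD using hex
  set Q : Finset ℕ :=
    (Finset.range N).filter (fun q => ∃ i j dir, TravAt r q i j dir) with hQdef
  have hQmem : ∀ q, q ∈ Q ↔ ∃ i j dir, TravAt r q i j dir := by
    intro q
    rw [hQdef, Finset.mem_filter, Finset.mem_range]
    refine ⟨fun h => h.2, fun h => ⟨?_, h⟩⟩
    obtain ⟨i, j, dir, ht⟩ := h
    have := ht.add_le_length
    omega
  have hQT : ∀ q ∈ Q, TravAt r q (I q) (J q) (D q) := fun q hq => hIJD q ((hQmem q).mp hq)
  have hsubq : ∀ q i j dir, TravAt r q i j dir → I q = i ∧ J q = j := by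
    intro q i j dir ht
    exact travAt_sub_unique (hQT q ((hQmem q).mpr ⟨i, j, dir, ht⟩)) ht
  set E : ℕ → Finset ℕ := fun q => Finset.Ico q (q + (m (I q) (J q) + 2)) with hE
  -- values along a traversal
  have hval : ∀ q ∈ Q, ∀ t ≤ m (I q) (J q) + 2,
      v (q + t) = (dirPath (I q) (J q) (D q)).getD t dflt := by
    intro q hq t ht
    show r.getD (q + t) dflt = _
    rw [List.getD_eq_getElem?_getD, List.getD_eq_getElem?_getD, (hQT q hq).get (by omega)]
  have hEsub : ∀ q ∈ Q, E q ⊆ Finset.range (N - 1) := by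
    intro q hq p hp
    rw [Finset.mem_Ico] at hp
    have := (hQT q hq).add_le_length
    rw [Finset.mem_range]
    omega
  have hdisj : (Q : Set ℕ).PairwiseDisjoint E := by
    intro q hq q' hq' hne
    simp only [Function.onFun]
    rw [Finset.disjoint_left]
    intro p hp hp'
    rw [Finset.mem_Ico] at hp hp'
    exact hne (edge_cover_unique (p := p) (hQT q (Finset.mem_coe.mp hq))
      (hQT q' (Finset.mem_coe.mp hq')) (by omega) (by omega) (by omega) (by omega))
  -- every vertical edge is covered by a traversal
  have hcover : ∀ p, p + 1 < N → (isPickV (v p) || isPickV (v (p + 1))) = true →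
      p ∈ Q.biUnion E := by
    intro p hp hpk
    rw [Bool.or_eq_true] at hpk
    have key : ∀ p0, p0 < N → isPickV (v p0) = true → p ≤ p0 → p0 ≤ p + 1 →
        p ∈ Q.biUnion E := by
      intro p0 hp0N hp0 hle1 hle2
      obtain ⟨i, j, k, hk⟩ := isPickV_eq_true hp0
      have hk' : r[p0]? = some (pk i j k) := by
        rw [getElem?_eq_getD dflt (by omega)]
        exact congrArg some hk
      obtain ⟨q, dir, hT, hq1, hq2⟩ := hnr p0 i j k hk'
      rw [subPath_length] at hq2
      have hqQ : q ∈ Q := (hQmem q).mpr ⟨i, j, dir, hT⟩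
      obtain ⟨hI, hJ⟩ := hsubq q i j dir hT
      obtain ⟨-, -, hoff⟩ := cover_eq hk' hT hq1 hq2
      rw [Finset.mem_biUnion]
      refine ⟨q, hqQ, ?_⟩
      rw [hE]
      simp only [Finset.mem_Ico]
      rw [hI, hJ]
      have hkb := k.isLt
      have hoff2 : q + 1 ≤ p0 ∧ p0 ≤ q + (m i j + 1) := by
        cases dir <;> simp only [if_true, if_false, Bool.false_eq_true, reduceIte] at hoff <;>
          omega
      omega
    rcases hpk with h | h
    · exact key p (by omega) h le_rfl (by omega)
    · exact key (p + 1) (by omega) h (by omega) le_rfl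
  have hbisub : Q.biUnion E ⊆ Finset.range (N - 1) := by
    intro p hp
    rw [Finset.mem_biUnion] at hp
    obtain ⟨q, hq, hp⟩ := hp
    exact hEsub q hq hp
  -- adjacency along the tour
  have hadj : ∀ p, p + 1 < N → Adj (v p) (v (p + 1)) := by
    rw [show List.Chain' Adj r ↔ r.IsChain Adj from Iff.rfl, List.isChain_iff_getElem] at hchain
    intro p hp
    have h := hchain p (by omega)
    have e1 : r.get ⟨p, by omega⟩ = v p := by
      show _ = r.getD p dflt
      rw [List.getD_eq_getElem (l := r) dflt (by omega)]
      simp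
    have e2 : r.get ⟨p + 1, by omega⟩ = v (p + 1) := by
      show _ = r.getD (p + 1) dflt
      rw [List.getD_eq_getElem (l := r) dflt (by omega)]
      simp
    simp only [List.get_eq_getElem] at e1 e2
    rwa [e1, e2] at h
  -- total vertical length
  have hd : 0 < d := by
    rw [← hvert 0 0]
    exact d_pos len hpos 0 0
  have hWsum : vertLen len r = (Q.card : ℝ) * d := by
    have hv1 : vertLen len r = ∑ p ∈ Finset.range (N - 1),
        (if isPickV (v p) || isPickV (v (p + 1)) then len (v p) (v (p + 1)) else 0) := by
      rw [vertLen, zipTailSum (fun x y => if isPickV x || isPickV y then len x y else 0) dflt r]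
    rw [hv1, ← Finset.sum_subset hbisub (by
      intro p hp hnp
      rw [Finset.mem_range] at hp
      by_cases hc : (isPickV (v p) || isPickV (v (p + 1))) = true
      · exact absurd (hcover p (by omega) hc) hnp
      · rw [if_neg hc])]
    rw [Finset.sum_biUnion hdisj]
    have hinner : ∀ q ∈ Q, (∑ p ∈ E q, (if isPickV (v p) || isPickV (v (p + 1))
        then len (v p) (v (p + 1)) else 0)) = d := by
      intro q hq
      rw [hE]
      simp only []
      rw [Finset.sum_Ico_eq_sum_range,
        show q + (m (I q) (J q) + 2) - q = m (I q) (J q) + 2 by omega]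
      rw [← trav_edge_sum len d hsymm (I q) (J q) (hvert _ _) (D q) dflt]
      refine Finset.sum_congr rfl fun t ht => ?_
      rw [Finset.mem_range] at ht
      rw [hval q hq t (by omega), show q + t + 1 = q + (t + 1) by omega,
        hval q hq (t + 1) (by omega)]
      rw [if_pos (dirPath_pick_cond (I q) (J q) (D q) dflt (by omega))]
    rw [Finset.sum_congr rfl hinner, Finset.sum_const, nsmul_eq_mul]
  -- parity of the number of first-block traversals
  have hparity : ((Q.filter fun q => J q = 0).card : ZMod 2) = 0 := by
    have h0 : ∑ p ∈ Finset.range (N - 1), (gTop (v (p + 1)) - gTop (v p)) = 0 := by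
      rw [Finset.sum_range_sub (fun p => gTop (v p)) (N - 1)]
      have hv0 : v 0 = art 0 0 := by
        rw [List.head?_eq_getElem?] at hhead
        exact Option.some_inj.mp ((getElem?_eq_getD dflt (by
          rw [List.length_pos_iff]
          intro hnil
          rw [hnil] at hhead
          exact absurd hhead (by simp))).symm.trans hhead)
      have hvN : v (N - 1) = art 0 0 := by
        rw [List.getLast?_eq_getElem?] at hlast
        have hNpos : 0 < N := by
          rw [hN, List.length_pos_iff]
          intro hnil
          rw [hnil] at hhead
          exact absurd hhead (by simp)
        exact Option.some_inj.mp ((getElem?_eq_getD dflt (by omega)).symm.trans hlast)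
      rw [hv0, hvN, sub_self]
    have h1 : ∑ p ∈ Finset.range (N - 1), (gTop (v (p + 1)) - gTop (v p))
        = ∑ q ∈ Q, (if J q = 0 then 1 else 0 : ZMod 2) := by
      rw [← Finset.sum_subset hbisub (by
        intro p hp hnp
        rw [Finset.mem_range] at hp
        by_cases hc : (isPickV (v p) || isPickV (v (p + 1))) = true
        · exact absurd (hcover p (by omega) hc) hnp
        · rw [Bool.or_eq_true] at hc
          push_neg at hc
          rw [gTop_eq_of_adj (hadj p (by omega))
            (Bool.not_eq_true _ ▸ hc.1) (Bool.not_eq_true _ ▸ hc.2), sub_self])]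
      rw [Finset.sum_biUnion hdisj]
      refine Finset.sum_congr rfl fun q hq => ?_
      rw [hE]
      simp only []
      rw [Finset.sum_Ico_eq_sum_range,
        show q + (m (I q) (J q) + 2) - q = m (I q) (J q) + 2 by omega]
      rw [← trav_parity_sum (I q) (J q) (D q) dflt]
      refine Finset.sum_congr rfl fun t ht => ?_
      rw [Finset.mem_range] at ht
      rw [hval q hq t (by omega), show q + t + 1 = q + (t + 1) by omega,
        hval q hq (t + 1) (by omega)]
    rw [h1] at h0
    rw [Finset.sum_boole] at h0
    exact h0
  -- injections from the required subaisles into traversal starts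
  have hch1 : ∀ a : Fin (n + 1), ∃ q, a ∈ K1 → q ∈ Q ∧ I q = a ∧ J q = 0 := by
    intro a
    by_cases ha : a ∈ K1
    · obtain ⟨q, dir, hT⟩ := htrav.1 a ha
      obtain ⟨hI, hJ⟩ := hsubq q a 0 dir hT
      exact ⟨q, fun _ => ⟨(hQmem q).mpr ⟨a, 0, dir, hT⟩, hI, hJ⟩⟩
    · exact ⟨0, fun h => absurd h ha⟩
  have hch2 : ∀ a : Fin (n + 1), ∃ q, a ∈ K2 → q ∈ Q ∧ I q = a ∧ J q = 1 := by
    intro a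
    by_cases ha : a ∈ K2
    · obtain ⟨q, dir, hT⟩ := htrav.2 a ha
      obtain ⟨hI, hJ⟩ := hsubq q a 1 dir hT
      exact ⟨q, fun _ => ⟨(hQmem q).mpr ⟨a, 1, dir, hT⟩, hI, hJ⟩⟩
    · exact ⟨0, fun h => absurd h ha⟩
  choose φ1 hφ1 using hch1
  choose φ2 hφ2 using hch2
  set S : Finset (Fin (n + 1) × Fin 2) := K1 ×ˢ {0} ∪ K2 ×ˢ {1} with hS
  set F : Fin (n + 1) × Fin 2 → ℕ := fun x => if x.2 = 0 then φ1 x.1 else φ2 x.1 with hF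
  have hFdata : ∀ x ∈ S, F x ∈ Q ∧ I (F x) = x.1 ∧ J (F x) = x.2 := by
    intro x hx
    rw [hS, Finset.mem_union, Finset.mem_product, Finset.mem_product,
      Finset.mem_singleton, Finset.mem_singleton] at hx
    rcases hx with ⟨h1, h2⟩ | ⟨h1, h2⟩
    · have hFx : F x = φ1 x.1 := by
        simp only [hF]
        rw [h2, if_pos rfl]
      rw [hFx]
      obtain ⟨hq, hI, hJ⟩ := hφ1 x.1 h1
      exact ⟨hq, hI, by rw [hJ, h2]⟩
    · have hFx : F x = φ2 x.1 := by
        simp only [hF]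
        rw [h2, if_neg (by decide)]
      rw [hFx]
      obtain ⟨hq, hI, hJ⟩ := hφ2 x.1 h1
      exact ⟨hq, hI, by rw [hJ, h2]⟩
  have hinjS : Set.InjOn F S := by
    intro x hx y hy hxy
    obtain ⟨-, hI1, hJ1⟩ := hFdata x (Finset.mem_coe.mp hx)
    obtain ⟨-, hI2, hJ2⟩ := hFdata y (Finset.mem_coe.mp hy)
    rw [hxy] at hI1 hJ1
    exact Prod.ext (hI1 ▸ hI2.symm ▸ rfl) (hJ1 ▸ hJ2.symm ▸ rfl)
  have hScard : S.card = K1.card + K2.card := by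
    have hdisjS : Disjoint (K1 ×ˢ ({0} : Finset (Fin 2))) (K2 ×ˢ ({1} : Finset (Fin 2))) := by
      rw [Finset.disjoint_left]
      rintro ⟨a, b⟩ h1 h2
      rw [Finset.mem_product, Finset.mem_singleton] at h1 h2
      rw [h1.2] at h2
      exact absurd h2.2 (by decide)
    rw [hS, Finset.card_union_of_disjoint hdisjS]
    simp
  have hcard_le : K1.card + K2.card ≤ Q.card := by
    rw [← hScard]
    exact Finset.card_le_card_of_injOn F (fun x hx => (hFdata x hx).1) hinjS
  have hne : Q.card ≠ K1.card + K2.card := by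
    intro hcard
    have himg : S.image F = Q := by
      refine Finset.eq_of_subset_of_card_le ?_ ?_
      · intro q hq
        rw [Finset.mem_image] at hq
        obtain ⟨x, hx, rfl⟩ := hq
        exact (hFdata x hx).1
      · rw [Finset.card_image_of_injOn hinjS, hScard, hcard]
    have hQ1 : Q.filter (fun q => J q = 0) = K1.image φ1 := by
      apply Finset.Subset.antisymm
      · intro q hq
        rw [Finset.mem_filter] at hq
        obtain ⟨hqQ, hqJ⟩ := hq
        rw [← himg, Finset.mem_image] at hqQ
        obtain ⟨x, hx, rfl⟩ := hqQ
        obtain ⟨-, hI, hJ⟩ := hFdata x hx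
        have hx2 : x.2 = 0 := by rw [← hJ]; exact hqJ
        have hx1 : x.1 ∈ K1 := by
          rw [hS, Finset.mem_union, Finset.mem_product, Finset.mem_product,
            Finset.mem_singleton, Finset.mem_singleton] at hx
          rcases hx with ⟨h1, -⟩ | ⟨-, h2⟩
          · exact h1
          · rw [hx2] at h2
            exact absurd h2.symm (by norm_num)
        rw [Finset.mem_image]
        refine ⟨x.1, hx1, ?_⟩
        simp only [hF]
        rw [hx2, if_pos rfl]
      · intro q hq
        rw [Finset.mem_image] at hq
        obtain ⟨a, ha, rfl⟩ := hq
        obtain ⟨hq, -, hJ⟩ := hφ1 a ha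
        rw [Finset.mem_filter]
        exact ⟨hq, hJ⟩
    have hQ1card : (Q.filter (fun q => J q = 0)).card = K1.card := by
      rw [hQ1, Finset.card_image_of_injOn]
      intro a ha b hb hab
      have h1 := (hφ1 a (Finset.mem_coe.mp ha)).2.1
      have h2 := (hφ1 b (Finset.mem_coe.mp hb)).2.1
      rw [hab] at h1
      rw [← h1, h2]
    rw [hQ1card] at hparity
    have : Even K1.card := by
      rw [even_iff_two_dvd]
      exact (ZMod.natCast_eq_zero_iff K1.card 2).mp hparity
    exact (Nat.not_even_iff_odd.mpr hodd) this
  have hQcard : K1.card + K2.card + 1 ≤ Q.card := by omega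
  constructor
  · rw [hWsum]
    intro hceq
    have : (Q.card : ℝ) = ((K1.card + K2.card : ℕ) : ℝ) :=
      mul_right_cancel₀ (ne_of_gt hd) hceq
    exact hne (Nat.cast_injective this)
  · rw [hWsum]
    have hcast : ((K1.card + K2.card : ℕ) : ℝ) + 1 ≤ (Q.card : ℝ) := by
      have := hQcard
      push_cast
      exact_mod_cast hQcard
    exact mul_le_mul_of_nonneg_right hcast (le_of_lt hd)

end TwoBlock
end
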